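/- Let G be a finite group of odd order acting linearly on a finite-dimensional real vector space V via a representation ρ : G → GL(V), and let V^G = {v ∈ V | ρ(g)v = v for all g ∈ G} denote the subspace of fixed vectors. Then the codimension dim V − dim V^G is an even number. -/

import Mathlib

open Polynomial Matrix
open scoped TensorProduct

section helpers

lemma aux_root_pow_eq_one {K : Type*} [Field K] {m : Type*} [Fintype m] [DecidableEq m]
    {M : Matrix m m K} {n : ℕ} (hM : M ^ n = 1) {μ : K}
    (hμ : (Matrix.charpoly M).IsRoot μ) : μ ^ n = 1 := by
  have hdet : (Matrix.scalar m μ - M).det = 0 := by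
    have h := hμ.eq_zero
    rw [Matrix.charpoly, _root_.eval_det, Matrix.matPolyEquiv_charmatrix, eval_sub, eval_X,
      eval_C] at h
    exact h
  obtain ⟨v, hv0, hv⟩ := (Matrix.exists_mulVec_eq_zero_iff).2 hdet
  have hMv : M.mulVec v = μ • v := by
    rw [Matrix.sub_mulVec, sub_eq_zero] at hv
    rw [← hv]
    ext i
    simp [Matrix.scalar, Matrix.mulVec_diagonal]
  have key : ∀ k : ℕ, (M ^ k).mulVec v = μ ^ k • v := by
    intro k
    induction k with
    | zero => simp
    | succ k ih =>
      rw [pow_succ, pow_succ, ← Matrix.mulVec_mulVec, hMv, Matrix.mulVec_smul, ih, smul_smul,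
        mul_comm]
  have h1 := key n
  rw [hM, Matrix.one_mulVec] at h1
  by_contra hne
  have : (μ ^ n - 1) • v = 0 := by rw [sub_smul, one_smul, ← h1, sub_self]
  rcases smul_eq_zero.1 this with h | h
  · exact hne (by rw [← sub_eq_zero]; exact h)
  · exact hv0 h

lemma aux_isIntegral_trace {V : Type*} [AddCommGroup V] [Module ℝ V]
    [FiniteDimensional ℝ V] {f : V →ₗ[ℝ] V} {n : ℕ} (hn : n ≠ 0) (hf : f ^ n = 1) :
    IsIntegral ℤ (LinearMap.trace ℝ V f) := by
  set B : Module.End ℂ (ℂ ⊗[ℝ] V) := f.baseChange ℂ with hB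
  have hBn : B ^ n = 1 := by
    rw [hB, ← LinearMap.baseChange_pow, hf, LinearMap.baseChange_one]
  let b := Module.finBasis ℂ (ℂ ⊗[ℝ] V)
  set M := LinearMap.toMatrix b b B with hM
  have hMn : M ^ n = 1 := by
    have h1 : LinearMap.toMatrixAlgEquiv b (B ^ n) = 1 := by rw [hBn, _root_.map_one]
    rw [map_pow] at h1
    simpa [LinearMap.toMatrixAlgEquiv, hM] using h1
  have htr : LinearMap.trace ℂ _ B = M.trace := LinearMap.trace_eq_matrix_trace ℂ b B
  have hroots : M.trace = (Matrix.charpoly M).roots.sum :=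
    Matrix.trace_eq_sum_roots_charpoly M
  have hint : IsIntegral ℤ M.trace := by
    rw [hroots]
    have : (Matrix.charpoly M).roots.sum ∈ integralClosure ℤ ℂ := by
      refine (integralClosure ℤ ℂ).multiset_sum_mem (fun x hx => ?_)
      have hroot : (Matrix.charpoly M).IsRoot x :=
        (Polynomial.mem_roots (Matrix.charpoly_monic M).ne_zero).1 hx
      have hxn : x ^ n = 1 := aux_root_pow_eq_one hMn hroot
      refine ⟨X ^ n - C 1, Polynomial.monic_X_pow_sub_C 1 hn, ?_⟩
      simp [hxn]
    exact this
  have hfin : algebraMap ℝ ℂ (LinearMap.trace ℝ V f) = M.trace := by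
    rw [← htr, hB, LinearMap.trace_baseChange]
  rw [← isIntegral_algebraMap_iff (algebraMap ℝ ℂ).injective, hfin]
  exact hint

lemma aux_trace_inv_eq_trace {G : Type*} [Group G] [Fintype G]
    {m : Type*} [Fintype m] [DecidableEq m]
    (A : G →* Matrix m m ℝ) (g : G) : (A g⁻¹).trace = (A g).trace := by
  classical
  set Q : Matrix m m ℝ := ∑ h : G, (A h)ᵀ * A h with hQ
  have key : (A g)ᵀ * Q * A g = Q := by
    rw [hQ, Finset.mul_sum, Finset.sum_mul]
    refine Fintype.sum_equiv (Equiv.mulRight g) _ _ (fun h => ?_)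
    simp [_root_.map_mul, Matrix.transpose_mul, Matrix.mul_assoc]
  -- Q is invertible
  have hdet : Q.det ≠ 0 := by
    intro h0
    obtain ⟨v, hv0, hv⟩ := (Matrix.exists_mulVec_eq_zero_iff).2 h0
    have hterm : ∀ h : G, (A h *ᵥ v) ⬝ᵥ (A h *ᵥ v) = 0 := by
      have hsum : ∑ h : G, (A h *ᵥ v) ⬝ᵥ (A h *ᵥ v) = 0 := by
        have h2 : v ⬝ᵥ (Q *ᵥ v) = 0 := by rw [hv, dotProduct_zero]
        rw [hQ] at h2
        have h3 : (∑ h : G, (A h)ᵀ * A h) *ᵥ v = ∑ h : G, ((A h)ᵀ * A h) *ᵥ v :=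
          map_sum (Matrix.mulVec.addMonoidHomLeft v) (fun h : G => (A h)ᵀ * A h) Finset.univ
        rw [h3] at h2
        have h4 : v ⬝ᵥ ∑ h : G, ((A h)ᵀ * A h) *ᵥ v
            = ∑ h : G, v ⬝ᵥ (((A h)ᵀ * A h) *ᵥ v) := by
          simp [dotProduct, Finset.sum_apply, Finset.mul_sum]
          exact Finset.sum_comm
        rw [h4] at h2
        rw [← h2]
        refine Finset.sum_congr rfl (fun h _ => ?_)
        rw [← Matrix.mulVec_mulVec, Matrix.dotProduct_mulVec v ((A h)ᵀ), Matrix.vecMul_transpose]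
      intro h
      refine (Finset.sum_eq_zero_iff_of_nonneg (fun i _ => ?_)).1 hsum h (Finset.mem_univ h)
      exact Finset.sum_nonneg (fun j _ => mul_self_nonneg _)
    have h1 := hterm 1
    rw [_root_.map_one, Matrix.one_mulVec] at h1
    exact hv0 ((dotProduct_self_eq_zero).1 h1)
  have hinv : Q⁻¹ * Q = 1 := Matrix.nonsing_inv_mul Q (isUnit_iff_ne_zero.2 hdet)
  have hinv' : Q * Q⁻¹ = 1 := Matrix.mul_nonsing_inv Q (isUnit_iff_ne_zero.2 hdet)
  have hAg : A g * A g⁻¹ = 1 := by rw [← _root_.map_mul, mul_inv_cancel, _root_.map_one]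
  have hrel : Q * A g⁻¹ = (A g)ᵀ * Q := by
    calc Q * A g⁻¹ = ((A g)ᵀ * Q * A g) * A g⁻¹ := by rw [key]
    _ = (A g)ᵀ * Q * (A g * A g⁻¹) := by rw [Matrix.mul_assoc ((A g)ᵀ * Q)]
    _ = (A g)ᵀ * Q := by rw [hAg, Matrix.mul_one]
  have hfin : A g⁻¹ = Q⁻¹ * ((A g)ᵀ * Q) := by
    rw [← hrel, ← Matrix.mul_assoc, hinv, Matrix.one_mul]
  rw [hfin, Matrix.trace_mul_comm, Matrix.mul_assoc, hinv', Matrix.mul_one,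
    Matrix.trace_transpose]

lemma aux_sum_eq_two_mul {α : Type*} [DecidableEq α] {R : Type*} [CommRing R]
    (σ : α → α) (f : α → R) :
    ∀ s : Finset α, (∀ a ∈ s, σ a ∈ s) → (∀ a ∈ s, σ (σ a) = a) → (∀ a ∈ s, σ a ≠ a) →
      (∀ a ∈ s, f (σ a) = f a) →
      ∃ t : Finset α, t ⊆ s ∧ ∑ a ∈ s, f a = 2 * ∑ a ∈ t, f a := by
  intro s
  induction s using Finset.strongInduction with
  | _ s ih =>
    intro hmem hinv hne hf
    rcases s.eq_empty_or_nonempty with rfl | ⟨a, ha⟩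
    · exact ⟨∅, Finset.Subset.refl _, by simp⟩
    have hσa : σ a ∈ s := hmem a ha
    have hane : σ a ≠ a := hne a ha
    set s' := (s.erase a).erase (σ a) with hs'
    have hsub : s' ⊆ s := (Finset.erase_subset _ _).trans (Finset.erase_subset _ _)
    have hlt : s' ⊂ s := Finset.ssubset_of_ssubset_of_subset
      (Finset.erase_ssubset (Finset.mem_erase.2 ⟨hane, hσa⟩)) (Finset.erase_subset _ _)
    have hmem' : ∀ b ∈ s', b ∈ s ∧ b ≠ a ∧ b ≠ σ a := by
      intro b hb
      rw [hs', Finset.mem_erase, Finset.mem_erase] at hb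
      exact ⟨hb.2.2, hb.2.1, hb.1⟩
    have hmem'' : ∀ b ∈ s', σ b ∈ s' := by
      intro b hb
      obtain ⟨hbs, hba, hbσa⟩ := hmem' b hb
      rw [hs', Finset.mem_erase, Finset.mem_erase]
      refine ⟨?_, ?_, hmem b hbs⟩
      · intro h; exact hba (by rw [← hinv b hbs, h, hinv a ha])
      · intro h; exact hbσa (by rw [← hinv b hbs, h])
    obtain ⟨t, hts, hsum⟩ := ih s' hlt
      (hmem'') (fun b hb => hinv b (hmem' b hb).1) (fun b hb => hne b (hmem' b hb).1)
      (fun b hb => hf b (hmem' b hb).1)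
    refine ⟨insert a t, Finset.insert_subset ha (hts.trans hsub), ?_⟩
    have haa : a ∉ t := fun h => (hmem' a (hts h)).2.1 rfl
    have hsplit : ∑ b ∈ s, f b = f a + f (σ a) + ∑ b ∈ s', f b := by
      rw [add_assoc, Finset.add_sum_erase _ f (Finset.mem_erase.2 ⟨hane, hσa⟩),
        Finset.add_sum_erase _ f ha]
    rw [hsplit, hf a ha, hsum, Finset.sum_insert haa]
    ring

end helpers

/-- The fixed-point subspace of a linear action of a finite group of odd order
on a finite-dimensional real vector space has even codimension. -/
theorem odd_order_rep_fixed_subspace_even_codim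
    {G : Type*} [Group G] [Fintype G] (hG : Odd (Fintype.card G))
    {V : Type*} [AddCommGroup V] [Module ℝ V] [FiniteDimensional ℝ V]
    (ρ : Representation ℝ G V) :
    Even (Module.finrank ℝ V - Module.finrank ℝ ρ.invariants) := by
  classical
  set n := Fintype.card G with hn
  have hn0 : n ≠ 0 := Fintype.card_ne_zero
  have : Invertible (n : ℝ) := invertibleOfNonzero (Nat.cast_ne_zero.2 hn0)
  set d := Module.finrank ℝ ρ.invariants with hd
  set D := Module.finrank ℝ V with hD
  set χ : G → ℝ := fun g => LinearMap.trace ℝ V (ρ g) with hχ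
  -- step 1 : sum of traces
  have h1 : ⅟(n : ℝ) • ∑ g : G, χ g = (d : ℝ) := by
    rw [← (Representation.isProj_averageMap ρ).trace]
    simp [hχ, Representation.averageMap, GroupAlgebra.average, _root_.map_sum]
    exact Or.inl hn
  have hsum : ∑ g : G, χ g = (n : ℝ) * d := by
    have := congrArg (fun x : ℝ => (n : ℝ) * x) h1
    simpa [smul_eq_mul, ← mul_assoc, mul_invOf_self] using this
  -- step 2 : trace at identity
  have hχ1 : χ 1 = (D : ℝ) := by
    simp [hχ, _root_.map_one, LinearMap.trace_one]
    exact hD.symm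
  -- step 3 : symmetry χ g⁻¹ = χ g
  have hsym : ∀ g : G, χ g⁻¹ = χ g := by
    intro g
    let b := Module.finBasis ℝ V
    let A : G →* Matrix _ _ ℝ :=
      (LinearMap.toMatrixAlgEquiv b).toRingEquiv.toRingHom.toMonoidHom.comp ρ
    have hA : ∀ h : G, χ h = (A h).trace := by
      intro h
      show LinearMap.trace ℝ V (ρ h) = _
      rw [LinearMap.trace_eq_matrix_trace ℝ b]
      simp [A, LinearMap.toMatrixAlgEquiv]
    rw [hA, hA, aux_trace_inv_eq_trace A g]
  -- step 4 : pairing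
  have hpair := aux_sum_eq_two_mul (fun g : G => g⁻¹) χ (Finset.univ.erase 1)
    (fun a ha => Finset.mem_erase.2 ⟨inv_ne_one.2 (Finset.mem_erase.1 ha).1, Finset.mem_univ _⟩)
    (fun a _ => inv_inv a)
    (fun a ha => by
      intro h
      have h2 : a * a = 1 := by nth_rewrite 1 [← h]; exact inv_mul_cancel a
      have hord : orderOf a ∣ 2 := orderOf_dvd_of_pow_eq_one (by rw [pow_two]; exact h2)
      have hordn : orderOf a ∣ n := hn ▸ orderOf_dvd_card
      rcases (Nat.dvd_prime Nat.prime_two).1 hord with h1 | h2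
      · exact (Finset.mem_erase.1 ha).1 (orderOf_eq_one_iff.1 h1)
      · exact (Nat.not_even_iff_odd.2 hG) (even_iff_two_dvd.2 (h2 ▸ hordn)))
    (fun a _ => hsym a)
  obtain ⟨t, hts, hsum2⟩ := hpair
  set r := ∑ a ∈ t, χ a with hr
  -- step 5 : integrality of r
  have hint : IsIntegral ℤ r := by
    have : r ∈ integralClosure ℤ ℝ := by
      refine Subalgebra.sum_mem _ (fun g _ => ?_)
      exact aux_isIntegral_trace hn0 (by rw [← _root_.map_pow, hn, pow_card_eq_one, _root_.map_one])
    exact this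
  -- step 6 : arithmetic
  have htotal : (n : ℝ) * d = (D : ℝ) + 2 * r := by
    rw [← hsum, ← Finset.add_sum_erase _ χ (Finset.mem_univ (1 : G)), hχ1, hsum2]
  set k : ℤ := (n : ℤ) * d - D with hk
  have hkr : (k : ℝ) = 2 * r := by push_cast [hk]; linarith
  have hkint : IsIntegral ℤ ((k : ℚ) / 2) := by
    rw [← isIntegral_algebraMap_iff (algebraMap ℚ ℝ).injective]
    have h2 : algebraMap ℚ ℝ ((k : ℚ) / 2) = (k : ℝ) / 2 := by push_cast; norm_num
    have h3 : algebraMap ℚ ℝ ((k : ℚ) / 2) = r := by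
      rw [h2, div_eq_iff (two_ne_zero' ℝ)]; linarith
    rw [h3]
    exact hint
  obtain ⟨y, hy⟩ := IsIntegrallyClosed.isIntegral_iff.1 hkint
  have hkeven : Even k := by
    have hy' : (y : ℚ) = (k : ℚ) / 2 := by exact_mod_cast hy
    have h2y : ((2 * y : ℤ) : ℚ) = ((k : ℤ) : ℚ) := by push_cast; rw [hy']; ring
    have hky : k = 2 * y := (Int.cast_injective (α := ℚ) h2y).symm
    exact ⟨y, by omega⟩
  -- finish
  have hdD : d ≤ D := Submodule.finrank_le _
  have hodd : Odd (n : ℤ) := by exact_mod_cast hG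
  have heven1 : Even ((n : ℤ) - 1) := Odd.sub_odd hodd odd_one
  have hfinal : Even ((D : ℤ) - d) := by
    have : (D : ℤ) - d = ((n : ℤ) - 1) * d - k := by rw [hk]; ring
    rw [this]
    exact (heven1.mul_right _).sub hkeven
  rw [← Int.even_coe_nat]
  have : ((D - d : ℕ) : ℤ) = (D : ℤ) - d := by
    push_cast [hdD]
    ring
  rw [this]
  exact hfinal
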